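/- Let Q be an NQPR in dimension d ≥ 2, and let N⁺ = ((d−1)√(d+1) − 1)/d. The set of density matrices ρ (d×d positive semidefinite matrices with trace 1) for which there exists an index j with Re tr(ρ Q_j) ≤ −N⁺ has exactly d² elements if and only if there exists a SIC Π_1, …, Π_{d²} in dimension d such that Q_j = −√(d+1)·Π_j + ((1 + √(d+1))/d)·I for every j. -/

import Mathlib

open scoped ComplexOrder

namespace NQPRAux

open Matrix

variable {d : ℕ}

local notation "M" => Matrix (Fin d) (Fin d) ℂ

lemma unit_star_mul (A : M) (hA : A.IsHermitian) :
    (star (IsHermitian.eigenvectorUnitary hA) : M) *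
      (IsHermitian.eigenvectorUnitary hA : M) = 1 :=
  (Matrix.mem_unitaryGroup_iff').mp (IsHermitian.eigenvectorUnitary hA).2

lemma trace_eigen (A : M) (hA : A.IsHermitian) :
    A.trace = ∑ i, (hA.eigenvalues i : ℂ) := by
  conv_lhs => rw [hA.spectral_theorem, Unitary.conjStarAlgAut_apply]
  rw [Matrix.trace_mul_cycle, unit_star_mul A hA, Matrix.one_mul]
  simp [Matrix.trace_diagonal]

lemma trace_sq_eigen (A : M) (hA : A.IsHermitian) :
    (A * A).trace = ∑ i, ((hA.eigenvalues i : ℂ)) ^ 2 := by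
  conv_lhs => rw [hA.spectral_theorem, Unitary.conjStarAlgAut_apply]
  rw [Matrix.trace_mul_cycle]
  rw [Matrix.mul_assoc, Matrix.mul_assoc, ← Matrix.mul_assoc _ (_ * _),
    ← Matrix.mul_assoc (star _ : M), unit_star_mul A hA, Matrix.one_mul,
    ← Matrix.mul_assoc, Matrix.trace_mul_cycle, ← Matrix.mul_assoc, unit_star_mul A hA,
    Matrix.one_mul, Matrix.diagonal_mul_diagonal]
  simp [Matrix.trace_diagonal, sq]

lemma trace_self_conj_re_nonneg (X : M) : 0 ≤ ((X * Xᴴ).trace).re := by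
  have : ((X * Xᴴ).trace).re = ∑ i, ∑ j, Complex.normSq (X i j) := by
    simp [Matrix.trace, Matrix.mul_apply, Matrix.conjTranspose_apply, Matrix.diag,
      Complex.mul_conj]
  rw [this]
  exact Finset.sum_nonneg fun i _ => Finset.sum_nonneg fun j _ => Complex.normSq_nonneg _

lemma eq_zero_of_trace_self_conj (X : M) (h : ((X * Xᴴ).trace).re = 0) : X = 0 := by
  have h2 : ∑ i, ∑ j, Complex.normSq (X i j) = 0 := by
    rw [← h]
    simp [Matrix.trace, Matrix.mul_apply, Matrix.conjTranspose_apply, Matrix.diag,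
      Complex.mul_conj]
  ext i j
  have h3 := (Finset.sum_eq_zero_iff_of_nonneg
    (fun i _ => Finset.sum_nonneg (fun j _ => Complex.normSq_nonneg _))).mp h2 i
    (Finset.mem_univ i)
  have h4 := (Finset.sum_eq_zero_iff_of_nonneg
    (fun j _ => Complex.normSq_nonneg _)).mp h3 j (Finset.mem_univ j)
  simpa using Complex.normSq_eq_zero.mp h4

lemma trace_real (A B : M) (hA : A.IsHermitian) (hB : B.IsHermitian) :
    (A * B).trace = (((A * B).trace.re : ℝ) : ℂ) := by
  have hst : (starRingEnd ℂ) ((A * B).trace) = (A * B).trace := by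
    have : star ((A * B).trace) = (A * B).trace := by
      rw [← Matrix.trace_conjTranspose, Matrix.conjTranspose_mul, hA.eq, hB.eq,
        Matrix.trace_mul_comm]
    exact this
  exact (Complex.conj_eq_iff_re.mp hst).symm

lemma sq_eq_self_of (A : M) (hA : A.IsHermitian)
    (hev : ∀ i, hA.eigenvalues i * hA.eigenvalues i = hA.eigenvalues i) : A * A = A := by
  have h := hA.spectral_theorem
  rw [h]
  have hDD : (diagonal (RCLike.ofReal ∘ hA.eigenvalues) : M) *
      diagonal (RCLike.ofReal ∘ hA.eigenvalues) = diagonal (RCLike.ofReal ∘ hA.eigenvalues) := by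
    rw [Matrix.diagonal_mul_diagonal]
    have hfun : (fun i => (RCLike.ofReal ∘ hA.eigenvalues : Fin d → ℂ) i *
        (RCLike.ofReal ∘ hA.eigenvalues : Fin d → ℂ) i)
        = (RCLike.ofReal ∘ hA.eigenvalues : Fin d → ℂ) := by
      funext i
      simp only [Function.comp_apply]
      exact_mod_cast congrArg (Complex.ofReal) (hev i)
    rw [hfun]
  calc (IsHermitian.eigenvectorUnitary hA : M) * diagonal (RCLike.ofReal ∘ hA.eigenvalues) *
        (star (IsHermitian.eigenvectorUnitary hA) : M) *
        ((IsHermitian.eigenvectorUnitary hA : M) * diagonal (RCLike.ofReal ∘ hA.eigenvalues) *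
        (star (IsHermitian.eigenvectorUnitary hA) : M))
      = (IsHermitian.eigenvectorUnitary hA : M) * (diagonal (RCLike.ofReal ∘ hA.eigenvalues) *
        ((star (IsHermitian.eigenvectorUnitary hA) : M) *
          (IsHermitian.eigenvectorUnitary hA : M)) * diagonal (RCLike.ofReal ∘ hA.eigenvalues)) *
        (star (IsHermitian.eigenvectorUnitary hA) : M) := by
        simp only [Matrix.mul_assoc]
    _ = (IsHermitian.eigenvectorUnitary hA : M) * diagonal (RCLike.ofReal ∘ hA.eigenvalues) *
        (star (IsHermitian.eigenvectorUnitary hA) : M) := by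
        rw [unit_star_mul A hA, Matrix.mul_one, hDD]

/-- purity bound: for a PSD matrix with unit trace, `tr(A²) ≤ 1`. -/
lemma eigen_sum_one (A : M) (hA : A.IsHermitian) (ht : A.trace = 1) :
    ∑ i, hA.eigenvalues i = 1 := by
  have h1 : ((∑ i, hA.eigenvalues i : ℝ) : ℂ) = 1 := by
    push_cast
    rw [← trace_eigen A hA, ht]
  exact_mod_cast h1

lemma eigen_le_one (A : M) (h : A.PosSemidef) (ht : A.trace = 1) (i : Fin d) :
    h.isHermitian.eigenvalues i ≤ 1 := by
  have := eigen_sum_one A h.isHermitian ht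
  calc h.isHermitian.eigenvalues i ≤ ∑ i, h.isHermitian.eigenvalues i :=
        Finset.single_le_sum (fun j _ => h.eigenvalues_nonneg j) (Finset.mem_univ i)
    _ = 1 := this

lemma trace_sq_real (A : M) (hA : A.IsHermitian) :
    (A * A).trace = ((∑ i, (hA.eigenvalues i) ^ 2 : ℝ) : ℂ) := by
  rw [trace_sq_eigen A hA]
  push_cast
  rfl

lemma purity_le_one (A : M) (h : A.PosSemidef) (ht : A.trace = 1) :
    ((A * A).trace).re ≤ 1 := by
  rw [trace_sq_real A h.isHermitian, Complex.ofReal_re]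
  calc ∑ i, (h.isHermitian.eigenvalues i) ^ 2 ≤ ∑ i, h.isHermitian.eigenvalues i := by
        refine Finset.sum_le_sum fun i _ => ?_
        have h0 := h.eigenvalues_nonneg i
        have h1 := eigen_le_one A h ht i
        nlinarith
    _ = 1 := eigen_sum_one A h.isHermitian ht

/-- if additionally `tr(A²) = 1`, then `A` is a projection. -/
lemma proj_of_purity (A : M) (h : A.PosSemidef) (ht : A.trace = 1)
    (h2 : (A * A).trace = 1) : A * A = A := by
  have hsq : ∑ i, (h.isHermitian.eigenvalues i) ^ 2 = 1 := by
    have := trace_sq_real A h.isHermitian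
    rw [h2] at this
    exact_mod_cast this.symm
  have hs1 := eigen_sum_one A h.isHermitian ht
  have hzero : ∑ i, (h.isHermitian.eigenvalues i - (h.isHermitian.eigenvalues i) ^ 2) = 0 := by
    rw [Finset.sum_sub_distrib, hs1, hsq, sub_self]
  refine sq_eq_self_of A h.isHermitian fun i => ?_
  have hterm := (Finset.sum_eq_zero_iff_of_nonneg (fun i _ => ?_)).mp hzero i (Finset.mem_univ i)
  · nlinarith [hterm]
  · have h0 := h.eigenvalues_nonneg i
    have h1 := eigen_le_one A h ht i
    nlinarith

set_option maxHeartbeats 1000000 in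
lemma rigidity (d : ℕ) (hd : 2 ≤ d)
    (Q : Fin (d ^ 2) → Matrix (Fin d) (Fin d) ℂ)
    (hherm : ∀ j, (Q j).IsHermitian)
    (htr : ∀ j, (Q j).trace = 1)
    (hpair : ∀ j k, (Q j * Q k).trace = if j = k then (d : ℂ) else 0)
    (hsum : ∑ j, Q j = (d : ℂ) • (1 : Matrix (Fin d) (Fin d) ℂ))
    (j0 : Fin (d ^ 2)) (ρ : Matrix (Fin d) (Fin d) ℂ)
    (hρ : ρ.PosSemidef) (ht1 : ρ.trace = 1)
    (hle : ((ρ * Q j0).trace).re ≤ -((((d : ℝ) - 1) * Real.sqrt (d + 1) - 1) / d)) :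
    ρ = ((-(Real.sqrt (d + 1))⁻¹ : ℝ) : ℂ) • Q j0 +
      (((Real.sqrt (d + 1) + 1) / (d * Real.sqrt (d + 1)) : ℝ) : ℂ) •
        (1 : Matrix (Fin d) (Fin d) ℂ) := by
  classical
  set s : ℝ := Real.sqrt (d + 1) with hs_def
  have hn2 : (2 : ℝ) ≤ (d : ℝ) := by exact_mod_cast hd
  have hn0 : (0 : ℝ) < (d : ℝ) := by linarith
  have hs2 : s ^ 2 = (d : ℝ) + 1 := Real.sq_sqrt (by positivity)
  have hs0 : (0 : ℝ) < s := Real.sqrt_pos.mpr (by positivity)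
  have hs1 : (1 : ℝ) < s := by nlinarith
  have hns : (d : ℝ) = s ^ 2 - 1 := by linarith
  have hn21 : (1 : ℝ) < (d : ℝ) ^ 2 := by nlinarith
  -- quasiprobabilities
  set p : Fin (d ^ 2) → ℝ := fun k => ((ρ * Q k).trace).re with hp_def
  have hpreal : ∀ k, (ρ * Q k).trace = ((p k : ℝ) : ℂ) := fun k =>
    trace_real ρ (Q k) hρ.isHermitian (hherm k)
  have hsump : ∑ k, p k = (d : ℝ) := by
    have hC : ∑ k, (ρ * Q k).trace = (d : ℂ) := by
      rw [← Matrix.trace_sum, ← Matrix.mul_sum, hsum, Matrix.mul_smul, Matrix.mul_one,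
        Matrix.trace_smul, ht1, smul_eq_mul, mul_one]
    have h2 : ((∑ k, p k : ℝ) : ℂ) = (d : ℂ) := by
      rw [← hC]
      push_cast
      exact Finset.sum_congr rfl fun k _ => (hpreal k).symm
    exact_mod_cast h2
  -- purity
  set T2 : ℝ := ((ρ * ρ).trace).re with hT2_def
  have hT2c : (ρ * ρ).trace = ((T2 : ℝ) : ℂ) := trace_real ρ ρ hρ.isHermitian hρ.isHermitian
  have hT2le : T2 ≤ 1 := purity_le_one ρ hρ ht1
  -- reconstruction matrix
  set Rb : Matrix (Fin d) (Fin d) ℂ := ∑ k, ((p k : ℝ) : ℂ) • Q k with hRb_def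
  have hRbherm : Rbᴴ = Rb := by
    simp [hRb_def, Matrix.conjTranspose_sum, Matrix.conjTranspose_smul, Complex.star_def,
      Complex.conj_ofReal, (hherm _).eq]
  set X : Matrix (Fin d) (Fin d) ℂ := (d : ℂ) • ρ - Rb with hX_def
  have hXherm : Xᴴ = X := by
    simp [hX_def, Matrix.conjTranspose_sub, Matrix.conjTranspose_smul, hρ.isHermitian.eq,
      hRbherm, Complex.star_def, Complex.conj_natCast]
  have h_rhoR : (ρ * Rb).trace = ((∑ k, (p k) ^ 2 : ℝ) : ℂ) := by
    rw [hRb_def, Matrix.mul_sum]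
    simp only [Matrix.mul_smul, Matrix.trace_sum, Matrix.trace_smul, smul_eq_mul]
    push_cast
    exact Finset.sum_congr rfl fun k _ => by rw [hpreal k]; push_cast; ring
  have h_Rrho : (Rb * ρ).trace = ((∑ k, (p k) ^ 2 : ℝ) : ℂ) := by
    rw [Matrix.trace_mul_comm]; exact h_rhoR
  have h_RR : (Rb * Rb).trace = (((d : ℝ) * ∑ k, (p k) ^ 2 : ℝ) : ℂ) := by
    rw [hRb_def, Matrix.sum_mul]
    simp only [Matrix.mul_sum, Matrix.smul_mul, Matrix.mul_smul, Matrix.trace_sum,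
      Matrix.trace_smul, smul_eq_mul, smul_smul, hpair]
    simp only [mul_ite, mul_zero, Finset.sum_ite_eq, Finset.mem_univ, if_true]
    push_cast
    rw [Finset.mul_sum]
    exact Finset.sum_congr rfl fun k _ => by ring
  have hXXc : (X * X).trace = (((d : ℝ) ^ 2 * T2 - (d : ℝ) * ∑ k, (p k) ^ 2 : ℝ) : ℂ) := by
    have hXXexp : X * X = ((d : ℂ) * (d : ℂ)) • (ρ * ρ) - (d : ℂ) • (ρ * Rb)
        - (d : ℂ) • (Rb * ρ) + Rb * Rb := by
      rw [hX_def]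
      simp only [Matrix.sub_mul, Matrix.mul_sub, Matrix.smul_mul, Matrix.mul_smul, smul_smul]
      module
    rw [hXXexp, Matrix.trace_add, Matrix.trace_sub, Matrix.trace_sub, Matrix.trace_smul,
      Matrix.trace_smul, Matrix.trace_smul, hT2c, h_rhoR, h_Rrho, h_RR]
    simp only [smul_eq_mul]
    push_cast
    ring
  have hXXnn : 0 ≤ ((X * X).trace).re := by
    have h := trace_self_conj_re_nonneg X
    rwa [hXherm] at h
  have hSle : ∑ k, (p k) ^ 2 ≤ (d : ℝ) * T2 := by
    rw [hXXc, Complex.ofReal_re] at hXXnn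
    by_contra hcon
    push_neg at hcon
    have := mul_pos hn0 (sub_pos.mpr hcon)
    nlinarith
  have hSn : ∑ k, (p k) ^ 2 ≤ (d : ℝ) := by nlinarith
  -- scalar analysis
  set t : ℝ := p j0 with ht_def
  set q' : ℝ := ((d : ℝ) - t) / ((d : ℝ) ^ 2 - 1) with hq'_def
  set E : ℝ := ∑ k ∈ Finset.univ.erase j0, (p k - q') ^ 2 with hE_def
  have hE0 : 0 ≤ E := Finset.sum_nonneg fun k _ => sq_nonneg _
  have hcard : (((Finset.univ : Finset (Fin (d ^ 2))).erase j0).card : ℝ) = (d : ℝ) ^ 2 - 1 := by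
    rw [Finset.card_erase_of_mem (Finset.mem_univ _), Finset.card_univ, Fintype.card_fin]
    have h1 : (1 : ℕ) ≤ d ^ 2 := Nat.one_le_iff_ne_zero.mpr (by positivity)
    push_cast [Nat.cast_sub h1]
    ring
  have hS1 : ∑ k ∈ Finset.univ.erase j0, p k = (d : ℝ) - t := by
    rw [Finset.sum_erase_eq_sub (Finset.mem_univ j0), hsump]
  have hS2 : ∑ k ∈ Finset.univ.erase j0, (p k) ^ 2 = (∑ k, (p k) ^ 2) - t ^ 2 := by
    rw [Finset.sum_erase_eq_sub (Finset.mem_univ j0)]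
  have hEexp : E = ((∑ k, (p k) ^ 2) - t ^ 2) - 2 * q' * ((d : ℝ) - t)
      + ((d : ℝ) ^ 2 - 1) * q' ^ 2 := by
    have e1 : E = (∑ k ∈ Finset.univ.erase j0, (p k) ^ 2)
        - 2 * q' * (∑ k ∈ Finset.univ.erase j0, p k)
        + (((Finset.univ : Finset (Fin (d ^ 2))).erase j0).card : ℝ) * q' ^ 2 := by
      rw [hE_def]
      rw [Finset.sum_congr rfl (fun k _ => (by ring :
        (p k - q') ^ 2 = (p k) ^ 2 - 2 * q' * p k + q' ^ 2))]
      rw [Finset.sum_add_distrib, Finset.sum_sub_distrib, ← Finset.mul_sum, Finset.sum_const,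
        nsmul_eq_mul]
    rw [e1, hS1, hS2, hcard]
  have ht_le : t ≤ (1 - ((d : ℝ) - 1) * s) / (d : ℝ) := by
    have : -((((d : ℝ) - 1) * s - 1) / (d : ℝ)) = (1 - ((d : ℝ) - 1) * s) / (d : ℝ) := by ring
    rw [← this]; exact hle
  have hne21 : ((d : ℝ) ^ 2 - 1) ≠ 0 := by nlinarith
  have hq : q' * ((d : ℝ) ^ 2 - 1) = (d : ℝ) - t := by
    rw [hq'_def]; field_simp
  have hkey : ((d : ℝ) ^ 2 - 1) * (E + ((d : ℝ) - ∑ k, (p k) ^ 2)) =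
      -(((d : ℝ) * t - (1 - ((d : ℝ) - 1) * s)) * ((d : ℝ) * t - (1 + ((d : ℝ) - 1) * s))) := by
    rw [hEexp]
    linear_combination (q' * ((d : ℝ) ^ 2 - 1) - ((d : ℝ) - t)) * hq
      - ((d : ℝ) - 1) ^ 2 * hs2
  have hfac1 : (d : ℝ) * t - (1 - ((d : ℝ) - 1) * s) ≤ 0 := by
    have := mul_le_mul_of_nonneg_left ht_le (le_of_lt hn0)
    rw [mul_div_cancel₀ _ (ne_of_gt hn0)] at this
    linarith
  have hfac2 : (d : ℝ) * t - (1 + ((d : ℝ) - 1) * s) < 0 := by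
    have hpos : (0 : ℝ) < ((d : ℝ) - 1) * s := mul_pos (by linarith) hs0
    linarith
  have hprod : 0 ≤ ((d : ℝ) * t - (1 - ((d : ℝ) - 1) * s)) * ((d : ℝ) * t - (1 + ((d : ℝ) - 1) * s)) := by
    have h := mul_nonneg (neg_nonneg.mpr hfac1) (neg_nonneg.mpr (le_of_lt hfac2))
    rw [neg_mul_neg] at h
    exact h
  have hEd : E + ((d : ℝ) - ∑ k, (p k) ^ 2) ≤ 0 := by
    have h3 : (0 : ℝ) < (d : ℝ) ^ 2 - 1 := by linarith
    have h4 : ((d : ℝ) ^ 2 - 1) * (E + ((d : ℝ) - ∑ k, (p k) ^ 2)) ≤ 0 := by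
      rw [hkey]; linarith
    by_contra hcon
    push_neg at hcon
    have := mul_pos h3 hcon
    linarith
  have hEzero : E = 0 := by linarith
  have hSeq : ∑ k, (p k) ^ 2 = (d : ℝ) := by linarith
  have hprod0 : ((d : ℝ) * t - (1 - ((d : ℝ) - 1) * s)) * ((d : ℝ) * t - (1 + ((d : ℝ) - 1) * s)) = 0 := by
    have h4 : ((d : ℝ) ^ 2 - 1) * (E + ((d : ℝ) - ∑ k, (p k) ^ 2)) = 0 := by
      rw [hEzero, hSeq]; ring
    linarith [hkey ▸ h4]
  have ht_eq : (d : ℝ) * t = 1 - ((d : ℝ) - 1) * s := by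
    rcases mul_eq_zero.mp hprod0 with h | h
    · linarith
    · exact absurd h (ne_of_lt hfac2)
  have htv : t = (1 - ((d : ℝ) - 1) * s) / (d : ℝ) := by
    field_simp
    linarith
  have hT2eq : T2 = 1 := by
    have h5 : (d : ℝ) * 1 ≤ (d : ℝ) * T2 := by rw [mul_one]; linarith [hSle, hSeq]
    have h6 := le_of_mul_le_mul_left h5 hn0
    linarith
  have hXXzero : ((X * X).trace).re = 0 := by
    rw [hXXc, Complex.ofReal_re, hSeq, hT2eq]
    ring
  have hX0 : X = 0 := by
    refine eq_zero_of_trace_self_conj X ?_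
    rw [hXherm]
    exact hXXzero
  have hρR : (d : ℂ) • ρ = Rb := by
    have := sub_eq_zero.mp (hX_def ▸ hX0)
    exact this
  have hpk : ∀ k, k ≠ j0 → p k = q' := by
    intro k hk
    have hmem : k ∈ Finset.univ.erase j0 := Finset.mem_erase.mpr ⟨hk, Finset.mem_univ k⟩
    have := (Finset.sum_eq_zero_iff_of_nonneg (fun i _ => sq_nonneg (p i - q'))).mp hEzero k hmem
    have := sq_eq_zero_iff.mp this
    linarith
  have hRbeval : Rb = ((t - q' : ℝ) : ℂ) • Q j0 + ((q' * (d : ℝ) : ℝ) : ℂ) • 1 := by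
    have hcongr : ∑ k ∈ Finset.univ.erase j0, ((p k : ℝ) : ℂ) • Q k
        = ∑ k ∈ Finset.univ.erase j0, ((q' : ℝ) : ℂ) • Q k :=
      Finset.sum_congr rfl fun k hk => by rw [hpk k (Finset.ne_of_mem_erase hk)]
    rw [hRb_def, ← Finset.add_sum_erase _ _ (Finset.mem_univ j0), hcongr]
    rw [← Finset.smul_sum, Finset.sum_erase_eq_sub (Finset.mem_univ j0), hsum]
    push_cast
    rw [smul_sub, sub_smul, smul_smul]
    abel
  have hd0c : (d : ℂ) ≠ 0 := by
    exact_mod_cast Nat.cast_ne_zero.mpr (by omega)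
  have hρeval : ρ = (d : ℂ)⁻¹ • Rb := by
    rw [← hρR, smul_smul, inv_mul_cancel₀ hd0c, one_smul]
  rw [hρeval, hRbeval, smul_add, smul_smul, smul_smul]
  have hdc : ((d : ℂ)) = (((d : ℝ) : ℝ) : ℂ) := by push_cast; ring
  have hne1 : s ^ 2 - 1 ≠ 0 := by nlinarith
  have hne2 : (s ^ 2 - 1) ^ 2 - 1 ≠ 0 := by nlinarith
  have e1 : (d : ℂ)⁻¹ * ((t - q' : ℝ) : ℂ) = ((-s⁻¹ : ℝ) : ℂ) := by
    rw [hdc, ← Complex.ofReal_inv, ← Complex.ofReal_mul]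
    congr 1
    rw [htv, hq'_def, htv]
    rw [hns]
    field_simp
    ring
  have e2 : (d : ℂ)⁻¹ * ((q' * (d : ℝ) : ℝ) : ℂ) = (((s + 1) / ((d : ℝ) * s) : ℝ) : ℂ) := by
    rw [hdc, ← Complex.ofReal_inv, ← Complex.ofReal_mul]
    congr 1
    rw [hq'_def, htv, hns]
    field_simp
    ring
  rw [e1, e2]

end NQPRAux

open Matrix in
set_option maxHeartbeats 1000000 in
/-- For an NQPR `Q` in dimension `d ≥ 2`, with `N⁺ = ((d−1)√(d+1) − 1)/d`, the set
of density matrices `ρ` for which some `j` satisfies `Re tr(ρ Q j) ≤ −N⁺` has exactly `d²`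
elements iff there is a SIC `Π` such that `Q j = −√(d+1)·Π j + ((1 + √(d+1))/d)·I` for all `j`. -/
theorem stmt_7 (d : ℕ) (hd : 2 ≤ d)
    (Q : Fin (d ^ 2) → Matrix (Fin d) (Fin d) ℂ)
    (hherm : ∀ j, (Q j).IsHermitian)
    (htr : ∀ j, (Q j).trace = 1)
    (hpair : ∀ j k, (Q j * Q k).trace = if j = k then (d : ℂ) else 0)
    (hsum : ∑ j, Q j = (d : ℂ) • (1 : Matrix (Fin d) (Fin d) ℂ)) :
    {ρ : Matrix (Fin d) (Fin d) ℂ | ρ.PosSemidef ∧ ρ.trace = 1 ∧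
        ∃ j, ((ρ * Q j).trace).re ≤
          -((((d : ℝ) - 1) * Real.sqrt (d + 1) - 1) / d)}.ncard = d ^ 2 ↔
      ∃ P : Fin (d ^ 2) → Matrix (Fin d) (Fin d) ℂ,
        (∀ j, (P j).IsHermitian) ∧
        (∀ j, P j * P j = P j) ∧
        (∀ j, (P j).trace = 1) ∧
        (∀ j k, (P j * P k).trace =
          ((d : ℂ) * (if j = k then 1 else 0) + 1) / ((d : ℂ) + 1)) ∧
        (∀ j, Q j = -((Real.sqrt (d + 1) : ℂ)) • P j +
          (((1 + Real.sqrt (d + 1)) / d : ℝ) : ℂ) • (1 : Matrix (Fin d) (Fin d) ℂ)) := by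
  classical
  have hn2 : (2 : ℝ) ≤ (d : ℝ) := by exact_mod_cast hd
  have hn0 : (0 : ℝ) < (d : ℝ) := by linarith
  set s : ℝ := Real.sqrt (d + 1) with hs_def
  have hs2 : s ^ 2 = (d : ℝ) + 1 := Real.sq_sqrt (by positivity)
  have hs0 : (0 : ℝ) < s := Real.sqrt_pos.mpr (by positivity)
  have hs1 : (1 : ℝ) < s := by nlinarith
  have hns : (d : ℝ) = s ^ 2 - 1 := by linarith
  have hd0c : (d : ℂ) ≠ 0 := Nat.cast_ne_zero.mpr (by omega)
  have hsc : ((s : ℝ) : ℂ) ≠ 0 := by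
    exact_mod_cast ne_of_gt hs0
  set R : Fin (d ^ 2) → Matrix (Fin d) (Fin d) ℂ := fun j =>
    ((-s⁻¹ : ℝ) : ℂ) • Q j + (((s + 1) / (d * s) : ℝ) : ℂ) • 1 with hR_def
  have hRherm : ∀ j, (R j).IsHermitian := by
    intro j
    show (R j)ᴴ = R j
    simp only [hR_def]
    simp [Matrix.conjTranspose_add, Matrix.conjTranspose_smul, Complex.star_def,
      Complex.conj_ofReal, (hherm j).eq, Matrix.conjTranspose_one]
  have hRtr : ∀ j, (R j).trace = 1 := by
    intro j
    have h1 : (R j).trace = ((-s⁻¹ : ℝ) : ℂ) * 1 + (((s + 1) / (d * s) : ℝ) : ℂ) * (d : ℂ) := by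
      simp only [hR_def, Matrix.trace_add, Matrix.trace_smul, smul_eq_mul, htr,
        Matrix.trace_one, Fintype.card_fin]
    rw [h1]
    push_cast
    field_simp
    ring
  have hRQc : ∀ j k, ((R j) * Q k).trace
      = ((-s⁻¹ * (if j = k then (d : ℝ) else 0) + (s + 1) / (d * s) : ℝ) : ℂ) := by
    intro j k
    have h1 : (R j) * Q k = ((-s⁻¹ : ℝ) : ℂ) • (Q j * Q k)
        + (((s + 1) / (d * s) : ℝ) : ℂ) • Q k := by
      simp only [hR_def, Matrix.add_mul, Matrix.smul_mul, Matrix.one_mul]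
    rw [h1, Matrix.trace_add, Matrix.trace_smul, Matrix.trace_smul, hpair, htr,
      smul_eq_mul, smul_eq_mul]
    split_ifs <;> (push_cast; ring)
  have hRR : ∀ j k, ((R j) * (R k)).trace
      = ((((if j = k then (d : ℝ) else 0) + 1) / ((d : ℝ) + 1) : ℝ) : ℂ) := by
    intro j k
    have hexp : (R j) * (R k) = (((-s⁻¹) * (-s⁻¹) : ℝ) : ℂ) • (Q j * Q k)
        + (((-s⁻¹) * ((s + 1) / (d * s)) : ℝ) : ℂ) • Q j
        + ((((s + 1) / (d * s)) * (-s⁻¹) : ℝ) : ℂ) • Q k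
        + ((((s + 1) / (d * s)) * ((s + 1) / (d * s)) : ℝ) : ℂ) • 1 := by
      simp only [hR_def, Matrix.add_mul, Matrix.mul_add, Matrix.smul_mul, Matrix.mul_smul,
        Matrix.one_mul, Matrix.mul_one, smul_smul]
      push_cast
      module
    have hne1 : s ^ 2 - 1 ≠ 0 := by nlinarith
    have hv1 : (-s⁻¹) * (-s⁻¹) * (d : ℝ) + (-s⁻¹) * ((s + 1) / (d * s))
        + ((s + 1) / (d * s)) * (-s⁻¹)
        + ((s + 1) / (d * s)) * ((s + 1) / (d * s)) * (d : ℝ)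
        = ((d : ℝ) + 1) / ((d : ℝ) + 1) := by
      rw [hns]
      field_simp
      ring
    have hv0 : (-s⁻¹) * (-s⁻¹) * 0 + (-s⁻¹) * ((s + 1) / (d * s))
        + ((s + 1) / (d * s)) * (-s⁻¹)
        + ((s + 1) / (d * s)) * ((s + 1) / (d * s)) * (d : ℝ)
        = (0 + 1) / ((d : ℝ) + 1) := by
      rw [hns]
      field_simp
      ring
    rw [hexp, Matrix.trace_add, Matrix.trace_add, Matrix.trace_add, Matrix.trace_smul,
      Matrix.trace_smul, Matrix.trace_smul, Matrix.trace_smul, hpair, htr j, htr k,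
      Matrix.trace_one, Fintype.card_fin]
    simp only [smul_eq_mul]
    split_ifs with h
    · rw [← hv1]
      push_cast
      ring
    · rw [← hv0]
      push_cast
      ring
  have hNval : -s⁻¹ * (d : ℝ) + (s + 1) / (d * s) = -((((d : ℝ) - 1) * s - 1) / d) := by
    rw [hns]
    have hne1 : s ^ 2 - 1 ≠ 0 := by nlinarith
    field_simp
    ring
  have hinj : Function.Injective R := by
    intro j k hjk
    by_contra hne
    have h1 := hRQc j j
    have h2 := hRQc k j
    rw [if_pos rfl] at h1
    rw [if_neg (fun h => hne h.symm)] at h2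
    rw [hjk] at h1
    have h3 := Complex.ofReal_inj.mp (h1.symm.trans h2)
    have hsd : 0 < s⁻¹ * (d : ℝ) := by positivity
    nlinarith
  set T : Set (Fin (d ^ 2)) := {j | (R j).PosSemidef} with hT_def
  have hmem : ∀ j, (R j).PosSemidef → R j ∈ {ρ : Matrix (Fin d) (Fin d) ℂ | ρ.PosSemidef ∧
      ρ.trace = 1 ∧ ∃ j', ((ρ * Q j').trace).re ≤ -((((d : ℝ) - 1) * s - 1) / d)} := by
    intro j hpsd
    refine ⟨hpsd, hRtr j, j, ?_⟩
    have h1 := hRQc j j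
    rw [if_pos rfl] at h1
    rw [h1, Complex.ofReal_re, hNval]
  have hset : {ρ : Matrix (Fin d) (Fin d) ℂ | ρ.PosSemidef ∧ ρ.trace = 1 ∧
      ∃ j, ((ρ * Q j).trace).re ≤ -((((d : ℝ) - 1) * s - 1) / d)} = R '' T := by
    ext ρ
    constructor
    · rintro ⟨hpsd, htr1, j, hj⟩
      have hrig : ρ = R j :=
        NQPRAux.rigidity d hd Q hherm htr hpair hsum j ρ hpsd htr1 hj
      refine ⟨j, ?_, hrig.symm⟩
      show (R j).PosSemidef
      rw [← hrig]
      exact hpsd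
    · rintro ⟨j, hjT, rfl⟩
      exact hmem j hjT
  have hncard : {ρ : Matrix (Fin d) (Fin d) ℂ | ρ.PosSemidef ∧ ρ.trace = 1 ∧
      ∃ j, ((ρ * Q j).trace).re ≤ -((((d : ℝ) - 1) * s - 1) / d)}.ncard = T.ncard := by
    rw [hset, Set.ncard_image_of_injective T hinj]
  rw [hncard]
  constructor
  · intro hcard
    have hTuniv : T = Set.univ := by
      refine Set.eq_of_subset_of_ncard_le (Set.subset_univ T) ?_ (Set.finite_univ)
      rw [Set.ncard_univ, Nat.card_eq_fintype_card, Fintype.card_fin, hcard]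
    have hPSD : ∀ j, (R j).PosSemidef := by
      intro j
      have : j ∈ T := by rw [hTuniv]; trivial
      exact this
    refine ⟨R, hRherm, ?_, hRtr, ?_, ?_⟩
    · intro j
      refine NQPRAux.proj_of_purity (R j) (hPSD j) (hRtr j) ?_
      have h1 := hRR j j
      rw [if_pos rfl] at h1
      rw [h1, div_self (by linarith : (d : ℝ) + 1 ≠ 0)]
      exact Complex.ofReal_one
    · intro j k
      rw [hRR j k]
      have hdc1 : ((d : ℂ) + 1) ≠ 0 := by
        have h0 := Complex.ofReal_ne_zero.mpr (show ((d : ℝ) + 1) ≠ 0 by positivity)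
        push_cast at h0
        exact h0
      split_ifs <;> (push_cast; field_simp) <;> ring
    · intro j
      have c1 : -((s : ℝ) : ℂ) * ((-s⁻¹ : ℝ) : ℂ) = 1 := by
        push_cast
        rw [neg_mul_neg, mul_inv_cancel₀ hsc]
      have c2 : -((s : ℝ) : ℂ) * (((s + 1) / (d * s) : ℝ) : ℂ) + (((1 + s) / d : ℝ) : ℂ) = 0 := by
        rw [show -((s : ℝ) : ℂ) = (((-s : ℝ) : ℝ) : ℂ) by push_cast; ring,
          ← Complex.ofReal_mul, ← Complex.ofReal_add, show (-s) * ((s + 1) / (d * s))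
            + (1 + s) / d = 0 by field_simp; ring, Complex.ofReal_zero]
      show Q j = -((s : ℝ) : ℂ) • R j + (((1 + s) / d : ℝ) : ℂ) • 1
      simp only [hR_def]
      rw [smul_add, smul_smul, smul_smul, c1, one_smul, add_assoc, ← add_smul, c2, zero_smul,
        add_zero]
  · rintro ⟨P, hPh, hPi, hPt, hPp, hPQ⟩
    have hRP : ∀ j, R j = P j := by
      intro j
      show ((-s⁻¹ : ℝ) : ℂ) • Q j + (((s + 1) / (d * s) : ℝ) : ℂ) • 1 = P j
      rw [hPQ j]
      rw [smul_add, smul_smul, smul_smul]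
      have c1 : ((-s⁻¹ : ℝ) : ℂ) * (-((s : ℝ) : ℂ)) = 1 := by
        push_cast
        rw [neg_mul_neg, inv_mul_cancel₀ hsc]
      have c2 : ((-s⁻¹ : ℝ) : ℂ) * (((1 + s) / d : ℝ) : ℂ) + (((s + 1) / (d * s) : ℝ) : ℂ) = 0 := by
        rw [← Complex.ofReal_mul, ← Complex.ofReal_add, show (-s⁻¹) * ((1 + s) / d)
          + (s + 1) / (d * s) = 0 by field_simp; ring, Complex.ofReal_zero]
      rw [c1, one_smul, add_assoc, ← add_smul, c2, zero_smul, add_zero]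
    have hTuniv : T = Set.univ := by
      ext j
      simp only [Set.mem_univ, iff_true, hT_def, Set.mem_setOf_eq]
      rw [hRP j]
      have hP2 : P j = (P j)ᴴ * P j := by
        rw [(hPh j).eq, hPi j]
      rw [hP2]
      exact Matrix.posSemidef_conjTranspose_mul_self (P j)
    rw [hTuniv, Set.ncard_univ, Nat.card_eq_fintype_card, Fintype.card_fin]
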